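/- Let X → Z and Y → Z be functors p and q between categories (or ∞-categories) with a functor f : X → Y over Z, such that p and q are coCartesian fibrations, f carries p-coCartesian morphisms to q-coCartesian morphisms, and for each object z of Z the induced functor f_z : X_z → Y_z on fibers is a coCartesian fibration. If for every morphism φ : z → z' in Z the induced pushforward functor φ_! : X_z → X_{z'} carries f_z-coCartesian morphisms to f_{z'}-coCartesian morphisms, then f is a coCartesian fibration. -/
import Mathlib


open CategoryTheory

namespace CocartesianFibration

variable {A B : Type*} [Category A] [Category B]

/-- A morphism `φ : a ⟶ b` is (strongly) cocartesian with respect to a functor `F : A ⥤ B`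
if every morphism `τ : a ⟶ c` whose image factors through `F.map φ` admits a unique
compatible lift `b ⟶ c`. -/
def Cocart (F : A ⥤ B) {a b : A} (φ : a ⟶ b) : Prop :=
  ∀ (c : A) (τ : a ⟶ c) (g : F.obj b ⟶ F.obj c), F.map φ ≫ g = F.map τ →
    ∃! ζ : b ⟶ c, F.map ζ = g ∧ φ ≫ ζ = τ

/-- A functor `F : A ⥤ B` is a cocartesian fibration if every morphism of `B` starting at
the image of an object admits a cocartesian lift. -/
def CocartFib (F : A ⥤ B) : Prop :=
  ∀ (a : A) (T : B) (g : F.obj a ⟶ T),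
    ∃ (b : A) (φ : a ⟶ b) (h : F.obj b = T), Cocart F φ ∧ F.map φ ≫ eqToHom h = g

/-- A morphism is vertical with respect to `F` if it lies in a fiber of `F`
(its image is an identity). -/
def Vert (F : A ⥤ B) {a a' : A} (ψ : a ⟶ a') : Prop :=
  ∃ h : F.obj a = F.obj a', F.map ψ = eqToHom h

variable {X Y Z : Type*} [Category X] [Category Y] [Category Z]

/-- Given `p : X ⥤ Z`, `q : Y ⥤ Z` and `f : X ⥤ Y` over `Z`, a vertical morphism
`ψ : x ⟶ x'` of `X` (lying in the fiber `X_z`) is fiberwise `f`-cocartesian if it is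
cocartesian for the induced functor `f_z : X_z ⥤ Y_z` on fibers. -/
def FiberCocart (p : X ⥤ Z) (q : Y ⥤ Z) (f : X ⥤ Y) {x x' : X} (ψ : x ⟶ x') : Prop :=
  Vert p ψ ∧
  ∀ (x'' : X) (τ : x ⟶ x''), Vert p τ →
    ∀ (χ : f.obj x' ⟶ f.obj x''), Vert q χ → f.map ψ ≫ χ = f.map τ →
      ∃! ζ : x' ⟶ x'', Vert p ζ ∧ f.map ζ = χ ∧ ψ ≫ ζ = τ

/-- The induced functor `f_z : X_z ⥤ Y_z` on each fiber is a cocartesian fibration: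
every vertical morphism of `Y` out of `f.obj x` admits a fiberwise `f`-cocartesian lift. -/
def FiberwiseCocartFib (p : X ⥤ Z) (q : Y ⥤ Z) (f : X ⥤ Y) : Prop :=
  ∀ (x : X) (y : Y) (g : f.obj x ⟶ y), Vert q g →
    ∃ (x' : X) (ψ : x ⟶ x') (h : f.obj x' = y),
      FiberCocart p q f ψ ∧ f.map ψ ≫ eqToHom h = g

end CocartesianFibration

open CocartesianFibration

/-- Let `p : X ⥤ Z` and `q : Y ⥤ Z` be cocartesian fibrations and
`f : X ⥤ Y` a functor over `Z` carrying `p`-cocartesian morphisms to `q`-cocartesian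
morphisms, such that the induced functor `f_z : X_z ⥤ Y_z` on each fiber is a cocartesian
fibration.  If for every morphism `φ : z ⟶ z'` of `Z` the pushforward `φ_! : X_z ⥤ X_{z'}`
carries `f_z`-cocartesian morphisms to `f_{z'}`-cocartesian morphisms (expressed
morphism-wise: whenever a fiberwise `f`-cocartesian `ψ` and a vertical `ψ'` fit into a
commuting square with two `p`-cocartesian morphisms, then `ψ'` is fiberwise
`f`-cocartesian), then `f` is a cocartesian fibration. -/
theorem cocartFib_of_fiberwise_and_pushforward
    {X Y Z : Type*} [Category X] [Category Y] [Category Z]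
    (p : X ⥤ Z) (q : Y ⥤ Z) (f : X ⥤ Y) (hover : f ⋙ q = p)
    (hp : CocartFib p) (hq : CocartFib q)
    (hpreserves : ∀ {a b : X} (φ : a ⟶ b), Cocart p φ → Cocart q (f.map φ))
    (hfiber : FiberwiseCocartFib p q f)
    (hpush : ∀ {x₁ x₂ y₁ y₂ : X} (ψ : x₁ ⟶ x₂) (χ₁ : x₁ ⟶ y₁) (χ₂ : x₂ ⟶ y₂)
      (ψ' : y₁ ⟶ y₂), FiberCocart p q f ψ → Cocart p χ₁ → Cocart p χ₂ → Vert p ψ' →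
        ψ ≫ χ₂ = χ₁ ≫ ψ' → FiberCocart p q f ψ') :
    CocartFib f := by
  have ho : ∀ x : X, q.obj (f.obj x) = p.obj x := fun x => Functor.congr_obj hover x
  have hm : ∀ {a b : X} (φ : a ⟶ b),
      q.map (f.map φ) = eqToHom (ho a) ≫ p.map φ ≫ eqToHom (ho b).symm := by
    intro a b φ
    have := Functor.congr_hom hover φ
    simp only [Functor.comp_map] at this
    rw [this]
  intro x T g₀
  -- p-cocartesian lift of q.map g₀
  obtain ⟨x₁, χ₀, h₁, hχ₀cc, hχ₀eq⟩ := hp x (q.obj T) (eqToHom (ho x).symm ≫ q.map g₀)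
  have hχ₀p : p.map χ₀ = eqToHom (ho x).symm ≫ q.map g₀ ≫ eqToHom h₁.symm := by
    simp only [← Category.assoc]; rw [← hχ₀eq]; simp
  -- factor g₀ through f.map χ₀
  have e₁T : q.obj (f.obj x₁) = q.obj T := (ho x₁).trans h₁
  obtain ⟨v, ⟨hvq, hvfac⟩, hvuniq⟩ :=
    hpreserves χ₀ hχ₀cc T g₀ (eqToHom e₁T) (by rw [hm χ₀, hχ₀p]; simp)
  -- fiberwise cocartesian lift of v
  obtain ⟨x₂, ψ, hT, hψfc, hψfac⟩ := hfiber x₁ T v ⟨e₁T, hvq⟩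
  obtain ⟨e₁₂, hψp⟩ := hψfc.1
  refine ⟨x₂, χ₀ ≫ ψ, hT, ?_, by rw [f.map_comp, Category.assoc, hψfac, hvfac]⟩
  -- main goal : Cocart f (χ₀ ≫ ψ)
  intro c τ g hg
  rw [f.map_comp, Category.assoc] at hg
  -- the image of g in the base, as a morphism out of p.obj x₁
  set gbar : p.obj x₁ ⟶ p.obj c :=
    eqToHom e₁₂ ≫ eqToHom (ho x₂).symm ≫ q.map g ≫ eqToHom (ho c) with hgbar
  have h2 : q.map (f.map χ₀) ≫ q.map (f.map ψ) ≫ q.map g = q.map (f.map τ) := by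
    rw [← q.map_comp, ← q.map_comp, hg]
  have key : p.map χ₀ ≫ gbar = p.map τ := by
    calc p.map χ₀ ≫ gbar
        = eqToHom (ho x).symm ≫
            (q.map (f.map χ₀) ≫ q.map (f.map ψ) ≫ q.map g) ≫ eqToHom (ho c) := by
          rw [hm χ₀, hm ψ, hψp, hgbar]; simp
      _ = eqToHom (ho x).symm ≫ q.map (f.map τ) ≫ eqToHom (ho c) := by rw [h2]
      _ = p.map τ := by rw [hm τ]; simp
  obtain ⟨ζ₁, ⟨hζ₁p, hζ₁fac⟩, hζ₁uniq⟩ := hχ₀cc c τ gbar key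
  -- f.map ζ₁ = f.map ψ ≫ g, by uniqueness of q-cocartesian lifts along f.map χ₀
  have hfζ₁ : f.map ζ₁ = f.map ψ ≫ g := by
    obtain ⟨w₀, hw₀, hw₀uniq⟩ :=
      hpreserves χ₀ hχ₀cc (f.obj c) (f.map τ) (q.map (f.map ζ₁))
        (by rw [← q.map_comp, ← f.map_comp, hζ₁fac])
    have ha : f.map ζ₁ = w₀ := hw₀uniq _ ⟨rfl, by rw [← f.map_comp, hζ₁fac]⟩
    have hb : f.map ψ ≫ g = w₀ := by
      refine hw₀uniq _ ⟨?_, hg⟩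
      rw [q.map_comp, hm ψ, hψp, hm ζ₁, hζ₁p, hgbar]; simp
    rw [ha, hb]
  -- p-cocartesian lifts of gbar from x₁ and from x₂
  obtain ⟨m, χ₁, hm₁, hχ₁cc, hχ₁eq⟩ := hp x₁ (p.obj c) gbar
  have hχ₁p : p.map χ₁ = gbar ≫ eqToHom hm₁.symm := by rw [← hχ₁eq]; simp
  obtain ⟨m', χ₂, hm₂, hχ₂cc, hχ₂eq⟩ := hp x₂ (p.obj c) (eqToHom e₁₂.symm ≫ gbar)
  have hχ₂p : p.map χ₂ = eqToHom e₁₂.symm ≫ gbar ≫ eqToHom hm₂.symm := by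
    simp only [← Category.assoc]; rw [← hχ₂eq]; simp
  -- the vertical part w : m ⟶ c with χ₁ ≫ w = ζ₁
  obtain ⟨w, ⟨hwp, hwfac⟩, hwuniq⟩ :=
    hχ₁cc c ζ₁ (eqToHom hm₁) (by rw [hχ₁p, hζ₁p]; simp)
  -- the pushforward ψ' : m ⟶ m' of ψ
  obtain ⟨ψ', ⟨hψ'p, hψ'fac⟩, hψ'uniq⟩ :=
    hχ₁cc m' (ψ ≫ χ₂) (eqToHom (hm₁.trans hm₂.symm))
      (by rw [hχ₁p, p.map_comp, hψp, hχ₂p]; simp)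
  have hψ'fc : FiberCocart p q f ψ' :=
    hpush ψ χ₁ χ₂ ψ' hψfc hχ₁cc hχ₂cc ⟨hm₁.trans hm₂.symm, hψ'p⟩ hψ'fac.symm
  -- factor g through f.map χ₂ : the vertical part χh
  have em' : q.obj (f.obj m') = q.obj (f.obj c) :=
    (ho m').trans ((hm₂).trans (ho c).symm)
  obtain ⟨χh, ⟨hχhq, hχhfac⟩, hχhuniq⟩ :=
    hpreserves χ₂ hχ₂cc (f.obj c) g (eqToHom em')
      (by rw [hm χ₂, hχ₂p, hgbar]; simp)
  -- f.map ψ' ≫ χh = f.map w, by uniqueness of q-cocartesian lifts along f.map χ₁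
  have hsq : f.map ψ' ≫ χh = f.map w := by
    obtain ⟨u₀, hu₀, hu₀uniq⟩ :=
      hpreserves χ₁ hχ₁cc (f.obj c) (f.map ζ₁) (q.map (f.map w))
        (by rw [← q.map_comp, ← f.map_comp, hwfac])
    have ha : f.map w = u₀ := hu₀uniq _ ⟨rfl, by rw [← f.map_comp, hwfac]⟩
    have hb : f.map ψ' ≫ χh = u₀ := by
      refine hu₀uniq _ ⟨?_, ?_⟩
      · rw [q.map_comp, hm ψ', hψ'p, hχhq, hm w, hwp]; simp
      · rw [← Category.assoc, ← f.map_comp, hψ'fac, f.map_comp, Category.assoc, hχhfac,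
          hfζ₁]
    rw [ha, hb]
  -- fiberwise-cocartesian lifting along ψ'
  obtain ⟨ζ', ⟨⟨hζ'e, hζ'p⟩, hζ'f, hζ'fac⟩, hζ'uniq⟩ :=
    hψ'fc.2 c w ⟨hm₁, hwp⟩ χh ⟨em', hχhq⟩ hsq
  refine ⟨χ₂ ≫ ζ', ⟨?_, ?_⟩, ?_⟩
  · rw [f.map_comp, hζ'f, hχhfac]
  · rw [Category.assoc, ← Category.assoc ψ, ← hψ'fac]
    simp only [Category.assoc]
    rw [hζ'fac, hwfac, hζ₁fac]
  · -- uniqueness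
    rintro ζ'' ⟨hζ''f, hζ''fac⟩
    rw [Category.assoc] at hζ''fac
    have hζ''p : p.map ζ'' = eqToHom e₁₂.symm ≫ gbar := by
      have : q.map (f.map ζ'') = q.map g := by rw [hζ''f]
      rw [hm ζ''] at this
      rw [hgbar]
      calc p.map ζ'' = eqToHom (ho x₂).symm ≫
            (eqToHom (ho x₂) ≫ p.map ζ'' ≫ eqToHom (ho c).symm) ≫ eqToHom (ho c) := by
            simp
        _ = eqToHom (ho x₂).symm ≫ q.map g ≫ eqToHom (ho c) := by rw [this]
        _ = _ := by simp
    -- ψ ≫ ζ'' = ζ₁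
    have hstep1 : ψ ≫ ζ'' = ζ₁ := by
      refine hζ₁uniq _ ⟨?_, hζ''fac⟩
      rw [p.map_comp, hψp, hζ''p]; simp
    -- factor ζ'' through χ₂
    obtain ⟨u, ⟨hup, hufac⟩, huuniq⟩ :=
      hχ₂cc c ζ'' (eqToHom hm₂) (by rw [hχ₂p, hζ''p]; simp)
    -- u = ζ'
    have hfu : f.map u = χh :=
      hχhuniq _ ⟨by rw [hm u, hup]; simp, by rw [← f.map_comp, hufac, hζ''f]⟩
    have hψ'u : ψ' ≫ u = w := by
      refine hwuniq _ ⟨?_, ?_⟩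
      · rw [p.map_comp, hψ'p, hup]; simp
      · rw [← Category.assoc, hψ'fac, Category.assoc, hufac, hstep1]
    have : u = ζ' := hζ'uniq _ ⟨⟨hm₂, hup⟩, hfu, hψ'u⟩
    rw [← hufac, this]
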